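/- For each i ∈ {1, …, θ} there exists a unique pair of k-linear maps ∂_i^K, ∂_i^L : U⁺(q) → U⁺(q) such that for every E ∈ U⁺(q) the identity E·F_i − F_i·E = ∂_i^K(E)·K_i − L_i·∂_i^L(E) holds in 𝒰(q). Moreover these maps satisfy: ∂_i^K(1) = ∂_i^L(1) = 0; ∂_i^K(E_j) = ∂_i^L(E_j) = δ_{ij} for all j; ∂_i^K(E·E') = ∂_i^K(E)·(K_i E' K_i⁻) + E·∂_i^K(E'); and ∂_i^L(E·E') = ∂_i^L(E)·E' + (L_i⁻ E L_i)·∂_i^L(E') for all E, E' ∈ U⁺(q). -/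

import Mathlib

/-- The generators `E_i, F_i, K_i, K_i⁻, L_i, L_i⁻` of the Drinfeld double `𝒰(q)`. -/
inductive UGen (θ : ℕ) : Type
  | E : Fin θ → UGen θ
  | F : Fin θ → UGen θ
  | K : Fin θ → UGen θ
  | Kinv : Fin θ → UGen θ
  | L : Fin θ → UGen θ
  | Linv : Fin θ → UGen θ

/-- The toral generators, i.e. those among `K_i, K_i⁻, L_i, L_i⁻`. -/
def UGen.IsToral {θ : ℕ} : UGen θ → Prop
  | .E _ => False
  | .F _ => False
  | _ => True

variable (k : Type*) [Field k] {θ : ℕ}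

/-- The image of a generator in the free algebra. -/
noncomputable def Ugen (g : UGen θ) : FreeAlgebra k (UGen θ) := FreeAlgebra.ι k g

/-- The defining relations of the algebra `𝒰(q)`. -/
inductive URel (q : Fin θ → Fin θ → kˣ) :
    FreeAlgebra k (UGen θ) → FreeAlgebra k (UGen θ) → Prop
  | toral_comm (X Y : UGen θ) (hX : X.IsToral) (hY : Y.IsToral) :
      URel q (Ugen k X * Ugen k Y) (Ugen k Y * Ugen k X)
  | K_Kinv (i : Fin θ) : URel q (Ugen k (.K i) * Ugen k (.Kinv i)) 1
  | Kinv_K (i : Fin θ) : URel q (Ugen k (.Kinv i) * Ugen k (.K i)) 1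
  | L_Linv (i : Fin θ) : URel q (Ugen k (.L i) * Ugen k (.Linv i)) 1
  | Linv_L (i : Fin θ) : URel q (Ugen k (.Linv i) * Ugen k (.L i)) 1
  | K_E (i j : Fin θ) : URel q (Ugen k (.K i) * Ugen k (.E j))
      ((q i j : k) • (Ugen k (.E j) * Ugen k (.K i)))
  | L_E (i j : Fin θ) : URel q (Ugen k (.L i) * Ugen k (.E j))
      ((q j i : k)⁻¹ • (Ugen k (.E j) * Ugen k (.L i)))
  | K_F (i j : Fin θ) : URel q (Ugen k (.K i) * Ugen k (.F j))
      ((q i j : k)⁻¹ • (Ugen k (.F j) * Ugen k (.K i)))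
  | L_F (i j : Fin θ) : URel q (Ugen k (.L i) * Ugen k (.F j))
      ((q j i : k) • (Ugen k (.F j) * Ugen k (.L i)))
  | E_F (i j : Fin θ) : URel q (Ugen k (.E i) * Ugen k (.F j) - Ugen k (.F j) * Ugen k (.E i))
      (if i = j then Ugen k (.K i) - Ugen k (.L i) else 0)

/-- The algebra `𝒰(q)`: the quotient of the free algebra on the generators
`E_i, F_i, K_i, K_i⁻, L_i, L_i⁻` by the defining relations. -/
noncomputable abbrev UqAlgebra (q : Fin θ → Fin θ → kˣ) := RingQuot (URel k q)

variable (q : Fin θ → Fin θ → kˣ)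

/-- The generator `E_i` of `𝒰(q)`. -/
noncomputable def UE (i : Fin θ) : UqAlgebra k q := RingQuot.mkAlgHom k (URel k q) (Ugen k (.E i))
/-- The generator `F_i` of `𝒰(q)`. -/
noncomputable def UF (i : Fin θ) : UqAlgebra k q := RingQuot.mkAlgHom k (URel k q) (Ugen k (.F i))
/-- The generator `K_i` of `𝒰(q)`. -/
noncomputable def UK (i : Fin θ) : UqAlgebra k q := RingQuot.mkAlgHom k (URel k q) (Ugen k (.K i))
/-- The generator `K_i⁻` of `𝒰(q)`. -/
noncomputable def UKinv (i : Fin θ) : UqAlgebra k q :=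
  RingQuot.mkAlgHom k (URel k q) (Ugen k (.Kinv i))
/-- The generator `L_i` of `𝒰(q)`. -/
noncomputable def UL (i : Fin θ) : UqAlgebra k q := RingQuot.mkAlgHom k (URel k q) (Ugen k (.L i))
/-- The generator `L_i⁻` of `𝒰(q)`. -/
noncomputable def ULinv (i : Fin θ) : UqAlgebra k q :=
  RingQuot.mkAlgHom k (URel k q) (Ugen k (.Linv i))


/-- The subalgebra `U⁺(q)` of `𝒰(q)` generated by the `E_i`. -/
noncomputable def Uplus : Subalgebra k (UqAlgebra k q) :=
  Algebra.adjoin k (Set.range fun i : Fin θ => UE k q i)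

/-- `E_j` as an element of `U⁺(q)`. -/
noncomputable def UEplus (j : Fin θ) : Uplus k q :=
  ⟨UE k q j, Algebra.subset_adjoin (Set.mem_range_self j)⟩

/-- The defining property of the pair of skew-derivations `(∂_i^K, ∂_i^L)`:
`E·F_i − F_i·E = ∂_i^K(E)·K_i − L_i·∂_i^L(E)` for every `E ∈ U⁺(q)`. -/
def IsSkewDerivPair (i : Fin θ) (dK dL : Uplus k q →ₗ[k] Uplus k q) : Prop :=
  ∀ E : Uplus k q,
    (E : UqAlgebra k q) * UF k q i - UF k q i * (E : UqAlgebra k q) =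
      (dK E : UqAlgebra k q) * UK k q i - UL k q i * (dL E : UqAlgebra k q)

/-! ### Auxiliary development -/

namespace UqAux

section

variable {k : Type*} [Field k] {θ : ℕ} (q : Fin θ → Fin θ → kˣ)

/-! #### Relations in the quotient algebra -/

lemma UK_mul_UE (i j : Fin θ) :
    UK k q i * UE k q j = (q i j : k) • (UE k q j * UK k q i) := by
  have h := RingQuot.mkAlgHom_rel k (URel.K_E (q := q) i j)
  simp only [map_mul, map_smul] at h
  exact h

lemma UL_mul_UE (i j : Fin θ) :
    UL k q i * UE k q j = (q j i : k)⁻¹ • (UE k q j * UL k q i) := by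
  have h := RingQuot.mkAlgHom_rel k (URel.L_E (q := q) i j)
  simp only [map_mul, map_smul] at h
  exact h

lemma UK_mul_UKinv (i : Fin θ) : UK k q i * UKinv k q i = 1 := by
  have h := RingQuot.mkAlgHom_rel k (URel.K_Kinv (q := q) i)
  simp only [map_mul, map_one] at h
  exact h

lemma UKinv_mul_UK (i : Fin θ) : UKinv k q i * UK k q i = 1 := by
  have h := RingQuot.mkAlgHom_rel k (URel.Kinv_K (q := q) i)
  simp only [map_mul, map_one] at h
  exact h

lemma UL_mul_ULinv (i : Fin θ) : UL k q i * ULinv k q i = 1 := by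
  have h := RingQuot.mkAlgHom_rel k (URel.L_Linv (q := q) i)
  simp only [map_mul, map_one] at h
  exact h

lemma ULinv_mul_UL (i : Fin θ) : ULinv k q i * UL k q i = 1 := by
  have h := RingQuot.mkAlgHom_rel k (URel.Linv_L (q := q) i)
  simp only [map_mul, map_one] at h
  exact h

lemma UE_mul_UF (i j : Fin θ) :
    UE k q i * UF k q j - UF k q j * UE k q i =
      if i = j then UK k q i - UL k q i else 0 := by
  have h := RingQuot.mkAlgHom_rel k (URel.E_F (q := q) i j)
  simp only [map_sub, map_mul, apply_ite (RingQuot.mkAlgHom k (URel k q)), map_zero] at h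
  exact h

/-! #### Conjugation lemmas -/

lemma conjK_mem (i : Fin θ) {a : UqAlgebra k q} (ha : a ∈ Uplus k q) :
    UK k q i * a * UKinv k q i ∈ Uplus k q := by
  induction ha using Algebra.adjoin_induction with
  | mem x hx =>
    obtain ⟨j, rfl⟩ := hx
    have : UK k q i * UE k q j * UKinv k q i = (q i j : k) • UE k q j := by
      rw [UK_mul_UE, smul_mul_assoc, mul_assoc, UK_mul_UKinv, mul_one]
    rw [this]
    exact Subalgebra.smul_mem _ (Algebra.subset_adjoin (Set.mem_range_self j)) _
  | algebraMap r =>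
    rw [show UK k q i * algebraMap k (UqAlgebra k q) r = algebraMap k (UqAlgebra k q) r * UK k q i
      from (Algebra.commutes r _).symm, mul_assoc, UK_mul_UKinv, mul_one]
    exact Subalgebra.algebraMap_mem _ r
  | add x y hx hy ihx ihy =>
    have : UK k q i * (x + y) * UKinv k q i =
        UK k q i * x * UKinv k q i + UK k q i * y * UKinv k q i := by noncomm_ring
    rw [this]; exact add_mem ihx ihy
  | mul x y hx hy ihx ihy =>
    have : UK k q i * (x * y) * UKinv k q i =
        (UK k q i * x * UKinv k q i) * (UK k q i * y * UKinv k q i) := by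
      have h := UKinv_mul_UK q i
      calc UK k q i * (x * y) * UKinv k q i
          = UK k q i * x * (UKinv k q i * UK k q i) * y * UKinv k q i := by
            rw [h]; noncomm_ring
        _ = (UK k q i * x * UKinv k q i) * (UK k q i * y * UKinv k q i) := by noncomm_ring
    rw [this]; exact mul_mem ihx ihy

lemma conjL_mem (i : Fin θ) {a : UqAlgebra k q} (ha : a ∈ Uplus k q) :
    ULinv k q i * a * UL k q i ∈ Uplus k q := by
  induction ha using Algebra.adjoin_induction with
  | mem x hx =>
    obtain ⟨j, rfl⟩ := hx
    have : ULinv k q i * UE k q j * UL k q i = (q j i : k) • UE k q j := by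
      have h : UE k q j * UL k q i = (q j i : k) • (UL k q i * UE k q j) := by
        rw [UL_mul_UE, smul_smul]
        rw [mul_inv_cancel₀ (Units.ne_zero (q j i)), one_smul]
      rw [mul_assoc, h, mul_smul_comm, ← mul_assoc, ULinv_mul_UL, one_mul]
    rw [this]
    exact Subalgebra.smul_mem _ (Algebra.subset_adjoin (Set.mem_range_self j)) _
  | algebraMap r =>
    rw [show ULinv k q i * algebraMap k (UqAlgebra k q) r
        = algebraMap k (UqAlgebra k q) r * ULinv k q i
      from (Algebra.commutes r _).symm, mul_assoc, ULinv_mul_UL, mul_one]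
    exact Subalgebra.algebraMap_mem _ r
  | add x y hx hy ihx ihy =>
    have : ULinv k q i * (x + y) * UL k q i =
        ULinv k q i * x * UL k q i + ULinv k q i * y * UL k q i := by noncomm_ring
    rw [this]; exact add_mem ihx ihy
  | mul x y hx hy ihx ihy =>
    have : ULinv k q i * (x * y) * UL k q i =
        (ULinv k q i * x * UL k q i) * (ULinv k q i * y * UL k q i) := by
      have h := UL_mul_ULinv q i
      calc ULinv k q i * (x * y) * UL k q i
          = ULinv k q i * x * (UL k q i * ULinv k q i) * y * UL k q i := by
            rw [h]; noncomm_ring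
        _ = (ULinv k q i * x * UL k q i) * (ULinv k q i * y * UL k q i) := by noncomm_ring
    rw [this]; exact mul_mem ihx ihy


/-! #### The Verma-type representation -/

/-- Index type for the basis of the representation: `K^c L^d E_w`. -/
abbrev Idx (θ : ℕ) : Type := (Fin θ → ℤ) × (Fin θ → ℤ) × List (Fin θ)

/-- The underlying vector space of the representation. -/
abbrev VV (k : Type*) [Field k] (θ : ℕ) : Type _ := Idx θ →₀ k

/-- Commutation scalar for `E_j` past `K^c L^d`. -/
def chiE (j : Fin θ) (c d : Fin θ → ℤ) : kˣ := ∏ m, ((q m j ^ c m)⁻¹ * q j m ^ d m)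

/-- Commutation scalar for `F_i` past `K^c L^d`. -/
def chiF (i : Fin θ) (c d : Fin θ → ℤ) : kˣ := ∏ m, (q m i ^ c m * (q i m ^ d m)⁻¹)

lemma chiE_add (j : Fin θ) (c d c' d' : Fin θ → ℤ) :
    chiE q j (c + c') (d + d') = chiE q j c d * chiE q j c' d' := by
  rw [chiE, chiE, chiE, ← Finset.prod_mul_distrib]
  refine Finset.prod_congr rfl fun m _ => ?_
  simp only [Pi.add_apply, zpow_add, mul_inv]
  exact mul_mul_mul_comm _ _ _ _

lemma chiF_add (j : Fin θ) (c d c' d' : Fin θ → ℤ) :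
    chiF q j (c + c') (d + d') = chiF q j c d * chiF q j c' d' := by
  rw [chiF, chiF, chiF, ← Finset.prod_mul_distrib]
  refine Finset.prod_congr rfl fun m _ => ?_
  simp only [Pi.add_apply, zpow_add, mul_inv]
  exact mul_mul_mul_comm _ _ _ _

lemma chiE_single_left (i j : Fin θ) : chiE q j (Pi.single i 1) 0 = (q i j)⁻¹ := by
  rw [chiE]
  rw [Finset.prod_eq_single i (fun b _ hb => by
    rw [Pi.single_eq_of_ne hb, Pi.zero_apply, zpow_zero, zpow_zero, inv_one, one_mul])
    (by simp)]
  rw [Pi.single_eq_same, Pi.zero_apply, zpow_zero, zpow_one, mul_one]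

lemma chiE_single_right (i j : Fin θ) : chiE q j 0 (Pi.single i 1) = q j i := by
  rw [chiE]
  rw [Finset.prod_eq_single i (fun b _ hb => by
    rw [Pi.single_eq_of_ne hb, Pi.zero_apply, zpow_zero, zpow_zero, inv_one, one_mul])
    (by simp)]
  rw [Pi.single_eq_same, Pi.zero_apply, zpow_zero, zpow_one, inv_one, one_mul]

lemma chiF_single_left (i j : Fin θ) : chiF q j (Pi.single i 1) 0 = q i j := by
  rw [chiF]
  rw [Finset.prod_eq_single i (fun b _ hb => by
    rw [Pi.single_eq_of_ne hb, Pi.zero_apply, zpow_zero, zpow_zero, inv_one, one_mul])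
    (by simp)]
  rw [Pi.single_eq_same, Pi.zero_apply, zpow_zero, zpow_one, inv_one, mul_one]

lemma chiF_single_right (i j : Fin θ) : chiF q j 0 (Pi.single i 1) = (q j i)⁻¹ := by
  rw [chiF]
  rw [Finset.prod_eq_single i (fun b _ hb => by
    rw [Pi.single_eq_of_ne hb, Pi.zero_apply, zpow_zero, zpow_zero, inv_one, one_mul])
    (by simp)]
  rw [Pi.single_eq_same, Pi.zero_apply, zpow_zero, zpow_one, one_mul]

lemma chiE_zero (j : Fin θ) : chiE q j 0 0 = 1 := by simp [chiE]

lemma chiE_mul_chiF (i : Fin θ) (c d : Fin θ → ℤ) : chiE q i c d * chiF q i c d = 1 := by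
  rw [chiE, chiF, ← Finset.prod_mul_distrib]
  apply Finset.prod_eq_one
  intro m _
  rw [mul_mul_mul_comm, inv_mul_cancel, mul_inv_cancel, one_mul]

lemma chiE_shift_left (i j : Fin θ) (c d : Fin θ → ℤ) :
    chiE q j (Pi.single i 1 + c) d = (q i j)⁻¹ * chiE q j c d := by
  have h := chiE_add q j (Pi.single i 1) 0 c d
  rw [zero_add] at h
  rw [h, chiE_single_left]

lemma chiE_shift_right (i j : Fin θ) (c d : Fin θ → ℤ) :
    chiE q j c (Pi.single i 1 + d) = q j i * chiE q j c d := by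
  have h := chiE_add q j 0 (Pi.single i 1) c d
  rw [zero_add] at h
  rw [h, chiE_single_right]

lemma chiF_shift_left (i j : Fin θ) (c d : Fin θ → ℤ) :
    chiF q j (Pi.single i 1 + c) d = q i j * chiF q j c d := by
  have h := chiF_add q j (Pi.single i 1) 0 c d
  rw [zero_add] at h
  rw [h, chiF_single_left]

lemma chiF_shift_right (i j : Fin θ) (c d : Fin θ → ℤ) :
    chiF q j c (Pi.single i 1 + d) = (q j i)⁻¹ * chiF q j c d := by
  have h := chiF_add q j 0 (Pi.single i 1) c d
  rw [zero_add] at h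
  rw [h, chiF_single_right]

/-- The shift operator `v_{c',d',w} ↦ v_{c+c',d+d',w}` (left multiplication by `K^c L^d`). -/
noncomputable def shift (c d : Fin θ → ℤ) : VV k θ →ₗ[k] VV k θ :=
  Finsupp.lmapDomain k k fun p => (c + p.1, d + p.2.1, p.2.2)

lemma shift_single (c d c' d' : Fin θ → ℤ) (w : List (Fin θ)) (r : k) :
    shift c d (Finsupp.single (c', d', w) r) = Finsupp.single (c + c', d + d', w) r := by
  rw [shift, Finsupp.lmapDomain_apply, Finsupp.mapDomain_single]

lemma shift_shift (c d c' d' : Fin θ → ℤ) (v : VV k θ) :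
    shift c d (shift c' d' v) = shift (c + c') (d + d') v := by
  simp only [shift, Finsupp.lmapDomain_apply]
  rw [← Finsupp.mapDomain_comp]
  congr 1
  funext p
  simp [Function.comp, add_assoc]

lemma shift_zero_zero (v : VV k θ) : shift 0 0 v = v := by
  induction v using Finsupp.induction_linear with
  | zero => simp
  | add f g hf hg => simp [map_add, hf, hg]
  | single p r =>
    obtain ⟨c, d, w⟩ := p
    rw [shift_single, zero_add, zero_add]

/-- The operator for `E_j`. -/
noncomputable def opE (j : Fin θ) : VV k θ →ₗ[k] VV k θ :=
  Finsupp.lift (VV k θ) k (Idx θ) fun p =>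
    Finsupp.single (p.1, p.2.1, j :: p.2.2) ((chiE q j p.1 p.2.1 : kˣ) : k)

lemma opE_single (j : Fin θ) (c d : Fin θ → ℤ) (w : List (Fin θ)) (r : k) :
    opE q j (Finsupp.single (c, d, w) r) =
      Finsupp.single (c, d, j :: w) (r * (chiE q j c d : k)) := by
  rw [opE, Finsupp.lift_apply, Finsupp.sum_single_index (by simp), Finsupp.smul_single,
    smul_eq_mul]

lemma opE_shift (j : Fin θ) (c d : Fin θ → ℤ) (v : VV k θ) :
    opE q j (shift c d v) = (chiE q j c d : k) • shift c d (opE q j v) := by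
  induction v using Finsupp.induction_linear with
  | zero => simp
  | add f g hf hg => simp [map_add, hf, hg, smul_add]
  | single p r =>
    obtain ⟨c', d', w⟩ := p
    rw [shift_single, opE_single, opE_single, shift_single, Finsupp.smul_single, smul_eq_mul,
      chiE_add]
    congr 1
    push_cast
    ring

/-- The recursively-defined value of `F_i` on a monomial `E_w` applied to the vacuum. -/
noncomputable def gF (i : Fin θ) : List (Fin θ) → VV k θ
  | [] => 0
  | j :: w => opE q j (gF i w) -
      (if i = j then
        Finsupp.single ((Pi.single i 1 : Fin θ → ℤ), (0 : Fin θ → ℤ), w) (1 : k) -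
          Finsupp.single ((0 : Fin θ → ℤ), (Pi.single i 1 : Fin θ → ℤ), w) (1 : k)
      else 0)

/-- The operator for `F_i`. -/
noncomputable def opF (i : Fin θ) : VV k θ →ₗ[k] VV k θ :=
  Finsupp.lift (VV k θ) k (Idx θ) fun p =>
    ((chiF q i p.1 p.2.1 : kˣ) : k) • shift p.1 p.2.1 (gF q i p.2.2)

lemma opF_single (i : Fin θ) (c d : Fin θ → ℤ) (w : List (Fin θ)) (r : k) :
    opF q i (Finsupp.single (c, d, w) r) =
      (r * (chiF q i c d : k)) • shift c d (gF q i w) := by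
  rw [opF, Finsupp.lift_apply, Finsupp.sum_single_index (by simp), smul_smul]

/-- The operators attached to the generators. -/
noncomputable def opGen : UGen θ → Module.End k (VV k θ)
  | .E j => opE q j
  | .F j => opF q j
  | .K i => shift (Pi.single i 1) 0
  | .Kinv i => shift (-Pi.single i 1) 0
  | .L i => shift 0 (Pi.single i 1)
  | .Linv i => shift 0 (-Pi.single i 1)

lemma opGen_toral {X : UGen θ} (hX : X.IsToral) : ∃ c d, opGen (k := k) q X = shift c d := by
  cases X with
  | E j => exact absurd hX (by simp [UGen.IsToral])
  | F j => exact absurd hX (by simp [UGen.IsToral])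
  | K i => exact ⟨_, _, rfl⟩
  | Kinv i => exact ⟨_, _, rfl⟩
  | L i => exact ⟨_, _, rfl⟩
  | Linv i => exact ⟨_, _, rfl⟩

lemma opGen_E (j : Fin θ) : opGen (k := k) q (.E j) = opE q j := rfl
lemma opGen_F (j : Fin θ) : opGen (k := k) q (.F j) = opF q j := rfl
lemma opGen_K (i : Fin θ) : opGen (k := k) q (.K i) = shift (Pi.single i 1) 0 := rfl
lemma opGen_Kinv (i : Fin θ) : opGen (k := k) q (.Kinv i) = shift (-Pi.single i 1) 0 := rfl
lemma opGen_L (i : Fin θ) : opGen (k := k) q (.L i) = shift 0 (Pi.single i 1) := rfl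
lemma opGen_Linv (i : Fin θ) : opGen (k := k) q (.Linv i) = shift 0 (-Pi.single i 1) := rfl

/-- The representation of the free algebra. -/
noncomputable def rep0 : FreeAlgebra k (UGen θ) →ₐ[k] Module.End k (VV k θ) :=
  FreeAlgebra.lift k (opGen q)

lemma rep0_Ugen (X : UGen θ) : rep0 q (Ugen k X) = opGen q X := by
  rw [rep0, Ugen, FreeAlgebra.lift_ι_apply]

lemma rep0_rel {x y : FreeAlgebra k (UGen θ)} (h : URel k q x y) : rep0 q x = rep0 q y := by
  induction h with
  | toral_comm X Y hX hY =>
    obtain ⟨c, d, hcd⟩ := opGen_toral q hX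
    obtain ⟨c', d', hcd'⟩ := opGen_toral q hY
    rw [map_mul, map_mul, rep0_Ugen, rep0_Ugen, hcd, hcd']
    apply LinearMap.ext
    intro v
    rw [Module.End.mul_apply, Module.End.mul_apply, shift_shift, shift_shift,
      add_comm c c', add_comm d d']
  | K_Kinv i =>
    rw [map_mul, map_one, rep0_Ugen, rep0_Ugen]
    apply LinearMap.ext
    intro v
    show (opGen (k := k) q (.K i) * opGen q (.Kinv i)) v = v
    rw [Module.End.mul_apply]
    show shift _ _ (shift _ _ v) = v
    rw [shift_shift]
    simp [shift_zero_zero]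
  | Kinv_K i =>
    rw [map_mul, map_one, rep0_Ugen, rep0_Ugen]
    apply LinearMap.ext
    intro v
    rw [Module.End.mul_apply]
    show shift _ _ (shift _ _ v) = v
    rw [shift_shift]
    simp [shift_zero_zero]
  | L_Linv i =>
    rw [map_mul, map_one, rep0_Ugen, rep0_Ugen]
    apply LinearMap.ext
    intro v
    rw [Module.End.mul_apply]
    show shift _ _ (shift _ _ v) = v
    rw [shift_shift]
    simp [shift_zero_zero]
  | Linv_L i =>
    rw [map_mul, map_one, rep0_Ugen, rep0_Ugen]
    apply LinearMap.ext
    intro v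
    rw [Module.End.mul_apply]
    show shift _ _ (shift _ _ v) = v
    rw [shift_shift]
    simp [shift_zero_zero]
  | K_E i j =>
    rw [map_mul, map_smul, map_mul, rep0_Ugen, rep0_Ugen]
    apply Finsupp.lhom_ext
    rintro ⟨c, d, w⟩ r
    simp only [opGen_K, opGen_E, Module.End.mul_apply, LinearMap.smul_apply]
    rw [opE_single, shift_single, shift_single, opE_single, Finsupp.smul_single, smul_eq_mul,
      chiE_shift_left]
    congr 1
    push_cast
    field_simp
    try ring
  | L_E i j =>
    rw [map_mul, map_smul, map_mul, rep0_Ugen, rep0_Ugen]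
    apply Finsupp.lhom_ext
    rintro ⟨c, d, w⟩ r
    simp only [opGen_L, opGen_E, Module.End.mul_apply, LinearMap.smul_apply]
    rw [opE_single, shift_single, shift_single, opE_single, Finsupp.smul_single, smul_eq_mul,
      chiE_shift_right]
    congr 1
    push_cast
    field_simp
    try ring
  | K_F i j =>
    rw [map_mul, map_smul, map_mul, rep0_Ugen, rep0_Ugen]
    apply Finsupp.lhom_ext
    rintro ⟨c, d, w⟩ r
    simp only [opGen_K, opGen_F, Module.End.mul_apply, LinearMap.smul_apply]
    rw [opF_single, map_smul, shift_shift, shift_single, opF_single, smul_smul,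
      chiF_shift_left]
    rw [show ((0 : Fin θ → ℤ) + d) = d from zero_add d]
    congr 1
    push_cast
    field_simp
    try ring
  | L_F i j =>
    rw [map_mul, map_smul, map_mul, rep0_Ugen, rep0_Ugen]
    apply Finsupp.lhom_ext
    rintro ⟨c, d, w⟩ r
    simp only [opGen_L, opGen_F, Module.End.mul_apply, LinearMap.smul_apply]
    rw [opF_single, map_smul, shift_shift, shift_single, opF_single, smul_smul,
      chiF_shift_right]
    rw [show ((0 : Fin θ → ℤ) + c) = c from zero_add c]
    congr 1
    push_cast
    field_simp
    try ring
  | E_F i j =>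
    rw [map_sub, map_mul, map_mul, rep0_Ugen, rep0_Ugen,
      apply_ite (rep0 q), map_sub, map_zero, rep0_Ugen, rep0_Ugen]
    apply Finsupp.lhom_ext
    rintro ⟨c, d, w⟩ r
    simp only [opGen_E, opGen_F, opGen_K, opGen_L, LinearMap.sub_apply, Module.End.mul_apply]
    rw [opF_single, opE_single, opF_single, map_smul, opE_shift]
    rw [show gF q j (i :: w) = opE q i (gF q j w) -
      (if j = i then
        Finsupp.single ((Pi.single j 1 : Fin θ → ℤ), (0 : Fin θ → ℤ), w) (1 : k) -
          Finsupp.single ((0 : Fin θ → ℤ), (Pi.single j 1 : Fin θ → ℤ), w) (1 : k)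
      else 0) from rfl]
    rw [map_sub, smul_sub, smul_smul]
    rw [show r * (chiF q j c d : k) * (chiE q i c d : k)
        = r * (chiE q i c d : k) * (chiF q j c d : k) from by ring]
    rw [sub_sub_self]
    by_cases h : i = j
    · subst h
      rw [if_pos rfl, if_pos rfl, LinearMap.sub_apply]
      have h1 : (chiE q i c d : k) * (chiF q i c d : k) = 1 := by
        rw [← Units.val_mul, chiE_mul_chiF, Units.val_one]
      rw [map_sub, shift_single, shift_single, shift_single, shift_single, smul_sub,
        Finsupp.smul_single, Finsupp.smul_single]
      simp only [smul_eq_mul, mul_one, mul_assoc, h1, add_zero, zero_add]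
      rw [add_comm c (Pi.single i 1), add_comm d (Pi.single i 1)]
    · rw [if_neg h, if_neg (fun hh => h hh.symm)]
      simp

/-- The representation of `𝒰(q)`. -/
noncomputable def rep : UqAlgebra k q →ₐ[k] Module.End k (VV k θ) :=
  RingQuot.liftAlgHom k ⟨rep0 q, fun _ _ h => rep0_rel q h⟩

lemma rep_UE (j : Fin θ) : rep q (UE k q j) = opE q j := by
  rw [rep, UE, RingQuot.liftAlgHom_mkAlgHom_apply, rep0_Ugen]; rfl

lemma rep_UK (i : Fin θ) : rep q (UK k q i) = shift (Pi.single i 1) 0 := by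
  rw [rep, UK, RingQuot.liftAlgHom_mkAlgHom_apply, rep0_Ugen]; rfl

lemma rep_UL (i : Fin θ) : rep q (UL k q i) = shift 0 (Pi.single i 1) := by
  rw [rep, UL, RingQuot.liftAlgHom_mkAlgHom_apply, rep0_Ugen]; rfl

/-! #### Injectivity via the vacuum vector -/

/-- The algebra map from the free algebra on the `E`'s onto `U⁺(q)`. -/
noncomputable def piE : FreeAlgebra k (Fin θ) →ₐ[k] UqAlgebra k q :=
  FreeAlgebra.lift k fun j => UE k q j

lemma exists_piE {a : UqAlgebra k q} (ha : a ∈ Uplus k q) : ∃ x, piE q x = a := by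
  induction ha using Algebra.adjoin_induction with
  | mem x hx =>
    obtain ⟨j, rfl⟩ := hx
    exact ⟨FreeAlgebra.ι k j, FreeAlgebra.lift_ι_apply _ _⟩
  | algebraMap r => exact ⟨algebraMap k _ r, (piE q).commutes r⟩
  | add x y hx hy ihx ihy =>
    obtain ⟨a, rfl⟩ := ihx
    obtain ⟨b, rfl⟩ := ihy
    exact ⟨a + b, map_add _ _ _⟩
  | mul x y hx hy ihx ihy =>
    obtain ⟨a, rfl⟩ := ihx
    obtain ⟨b, rfl⟩ := ihy
    exact ⟨a * b, map_mul _ _ _⟩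

/-- The basis of the free algebra indexed by lists. -/
noncomputable def bL : Module.Basis (List (Fin θ)) k (FreeAlgebra k (Fin θ)) :=
  (FreeAlgebra.basisFreeMonoid k (Fin θ)).reindex FreeMonoid.toList

lemma bL_apply (w : List (Fin θ)) :
    bL (k := k) w = (FreeAlgebra.equivMonoidAlgebraFreeMonoid (R := k) (X := Fin θ)).symm
      (MonoidAlgebra.single (FreeMonoid.ofList w) 1) := by
  rw [bL, Module.Basis.reindex_apply, FreeAlgebra.basisFreeMonoid, Module.Basis.map_apply]
  rw [show (Finsupp.basisSingleOne : Module.Basis (FreeMonoid (Fin θ)) k (FreeMonoid (Fin θ) →₀ k))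
      (FreeMonoid.toList.symm w) = Finsupp.single (FreeMonoid.toList.symm w) 1
    from congrFun Finsupp.coe_basisSingleOne _]
  rfl

lemma equivMAFM_ι (j : Fin θ) :
    FreeAlgebra.equivMonoidAlgebraFreeMonoid (R := k) (X := Fin θ) (FreeAlgebra.ι k j)
      = MonoidAlgebra.single (FreeMonoid.of j) 1 := by
  simp [FreeAlgebra.equivMonoidAlgebraFreeMonoid, MonoidAlgebra.of_apply]

lemma bL_nil : bL (k := k) (θ := θ) [] = 1 := by
  rw [bL_apply]
  have : MonoidAlgebra.single (FreeMonoid.ofList ([] : List (Fin θ))) (1 : k)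
      = (1 : MonoidAlgebra k (FreeMonoid (Fin θ))) := by
    rw [MonoidAlgebra.one_def]
    rfl
  rw [this, map_one]

lemma bL_cons (j : Fin θ) (w : List (Fin θ)) :
    bL (k := k) (j :: w) = FreeAlgebra.ι k j * bL (k := k) w := by
  rw [bL_apply, bL_apply]
  have h1 : FreeMonoid.ofList (j :: w) = FreeMonoid.of j * FreeMonoid.ofList w := by
    rfl
  rw [h1, show MonoidAlgebra.single (FreeMonoid.of j * FreeMonoid.ofList w) (1 : k)
      = MonoidAlgebra.single (FreeMonoid.of j) (1 : k)
        * MonoidAlgebra.single (FreeMonoid.ofList w) (1 : k) from by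
    rw [MonoidAlgebra.single_mul_single, one_mul], map_mul]
  congr 1
  rw [← equivMAFM_ι, AlgEquiv.symm_apply_apply]

/-- The vacuum vector `K^c L^d`. -/
noncomputable def vac (c d : Fin θ → ℤ) : VV k θ := Finsupp.single (c, d, []) 1

/-- The scalar by which a monomial acts on the vacuum. -/
noncomputable def psi (c d : Fin θ → ℤ) : List (Fin θ) → kˣ
  | [] => 1
  | j :: w => chiE q j c d * psi c d w

lemma piE_ι (j : Fin θ) : piE q (FreeAlgebra.ι k j) = UE k q j :=
  FreeAlgebra.lift_ι_apply _ _

lemma rep_bL (c d : Fin θ → ℤ) (w : List (Fin θ)) :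
    rep q (piE q (bL (k := k) w)) (vac c d) =
      Finsupp.single (c, d, w) ((psi q c d w : k)) := by
  induction w with
  | nil =>
    rw [bL_nil, map_one, map_one, Module.End.one_apply]
    rw [show psi q c d [] = 1 from rfl, Units.val_one, vac]
  | cons j w ih =>
    rw [bL_cons, map_mul, map_mul, Module.End.mul_apply, ih, piE_ι, rep_UE, opE_single]
    rw [show psi q c d (j :: w) = chiE q j c d * psi q c d w from rfl]
    congr 1
    push_cast
    ring

/-- Evaluation of `U⁺(q)` (through the free algebra) on the vacuum `K^c L^d`. -/
noncomputable def Theta (c d : Fin θ → ℤ) : FreeAlgebra k (Fin θ) →ₗ[k] VV k θ :=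
  (LinearMap.applyₗ (vac c d)).comp ((rep q).toLinearMap.comp (piE q).toLinearMap)

lemma Theta_apply (c d : Fin θ → ℤ) (x : FreeAlgebra k (Fin θ)) :
    Theta q c d x = rep q (piE q x) (vac c d) := rfl

/-- An explicit left inverse of `Theta`. -/
noncomputable def Rinv (c d : Fin θ → ℤ) : VV k θ →ₗ[k] FreeAlgebra k (Fin θ) :=
  Finsupp.lift _ k (Idx θ) fun p => (((psi q c d p.2.2)⁻¹ : kˣ) : k) • bL (k := k) p.2.2

lemma Rinv_Theta (c d : Fin θ → ℤ) (x : FreeAlgebra k (Fin θ)) :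
    Rinv q c d (Theta q c d x) = x := by
  have h : (Rinv q c d).comp (Theta q c d) = LinearMap.id := by
    apply Module.Basis.ext (bL (k := k) (θ := θ))
    intro w
    rw [LinearMap.comp_apply, Theta_apply, rep_bL, LinearMap.id_apply, Rinv,
      Finsupp.lift_apply, Finsupp.sum_single_index (by simp), smul_smul]
    rw [show ((psi q c d w : k)) * (((psi q c d w)⁻¹ : kˣ) : k) = 1 from by
      rw [← Units.val_mul, mul_inv_cancel, Units.val_one], one_smul]
  calc Rinv q c d (Theta q c d x) = ((Rinv q c d).comp (Theta q c d)) x := rfl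
    _ = x := by rw [h, LinearMap.id_apply]

lemma Theta_injective (c d : Fin θ → ℤ) : Function.Injective (Theta q c d) :=
  Function.LeftInverse.injective (g := Rinv q c d) (Rinv_Theta q c d)

/-- The set of indices with fixed torus part. -/
def SS (c d : Fin θ → ℤ) : Set (Idx θ) := {p | p.1 = c ∧ p.2.1 = d}

lemma Theta_mem_supported (c d : Fin θ → ℤ) (x : FreeAlgebra k (Fin θ)) :
    Theta q c d x ∈ Finsupp.supported k k (SS (θ := θ) c d) := by
  have hx : Finsupp.linearCombination k (bL (k := k) (θ := θ))
      ((bL (k := k) (θ := θ)).repr x) = x := Module.Basis.linearCombination_repr _ _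
  rw [← hx, Finsupp.linearCombination_apply, map_finsuppSum]
  apply Submodule.finsuppSum_mem
  intro w hw
  rw [map_smul]
  apply Submodule.smul_mem
  rw [Theta_apply, rep_bL]
  exact Finsupp.single_mem_supported _ _ ⟨rfl, rfl⟩

lemma shift_mem_supported (c d : Fin θ → ℤ) {v : VV k θ}
    (hv : v ∈ Finsupp.supported k k (SS (θ := θ) 0 0)) :
    shift c d v ∈ Finsupp.supported k k (SS (θ := θ) c d) := by
  rw [Finsupp.mem_supported] at hv ⊢
  rw [shift, Finsupp.lmapDomain_apply]
  refine Set.Subset.trans (Finset.coe_subset.mpr Finsupp.mapDomain_support) ?_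
  intro p hp
  rw [Finset.coe_image] at hp
  obtain ⟨p', hp', rfl⟩ := hp
  obtain ⟨h1, h2⟩ := hv hp'
  refine ⟨?_, ?_⟩ <;> simp [h1, h2]

lemma shift_injective (c d : Fin θ → ℤ) : Function.Injective (shift (k := k) (θ := θ) c d) := by
  intro u v h
  have h2 := congrArg (shift (-c) (-d)) h
  rwa [shift_shift, shift_shift, neg_add_cancel, neg_add_cancel, shift_zero_zero,
    shift_zero_zero] at h2

lemma inj_zero (i : Fin θ) {a b : UqAlgebra k q} (ha : a ∈ Uplus k q) (hb : b ∈ Uplus k q)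
    (h : a * UK k q i - UL k q i * b = 0) : a = 0 ∧ b = 0 := by
  obtain ⟨x, rfl⟩ := exists_piE q ha
  obtain ⟨y, rfl⟩ := exists_piE q hb
  rw [sub_eq_zero] at h
  have h0 := congrArg (fun u => rep q u (vac (k := k) (0 : Fin θ → ℤ) 0)) h
  simp only [map_mul, Module.End.mul_apply, rep_UK, rep_UL] at h0
  rw [show shift (Pi.single i 1) 0 (vac (k := k) (0 : Fin θ → ℤ) 0)
      = vac (Pi.single i 1) 0 from by rw [vac, vac, shift_single, add_zero, add_zero]] at h0
  have hL : Theta q (Pi.single i 1) 0 x = shift 0 (Pi.single i 1) (Theta q 0 0 y) := h0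
  have hdisj : Disjoint (SS (θ := θ) (Pi.single i 1) 0) (SS (θ := θ) 0 (Pi.single i 1)) := by
    rw [Set.disjoint_left]
    rintro p ⟨h1, h2⟩ ⟨h3, h4⟩
    have h5 : (Pi.single i 1 : Fin θ → ℤ) = 0 := by rw [← h1, h3]
    have h6 := congrFun h5 i
    rw [Pi.single_eq_same, Pi.zero_apply] at h6
    exact one_ne_zero h6
  have hzero : Theta q (Pi.single i 1) 0 x = 0 :=
    Submodule.disjoint_def.mp (Finsupp.disjoint_supported_supported hdisj) _
      (Theta_mem_supported q _ _ x)
      (hL ▸ shift_mem_supported 0 (Pi.single i 1) (Theta_mem_supported q 0 0 y))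
  constructor
  · have hx : x = 0 := Theta_injective q _ _ (by rw [hzero, map_zero])
    rw [hx, map_zero]
  · have hy0 : shift 0 (Pi.single i 1) (Theta q 0 0 y) = 0 := by rw [← hL, hzero]
    have hy1 : Theta q 0 0 y = 0 := shift_injective 0 (Pi.single i 1)
      (by rw [hy0, map_zero])
    have hy : y = 0 := Theta_injective q _ _ (by rw [hy1, map_zero])
    rw [hy, map_zero]

/-- Uniqueness of the decomposition `x·K_i − L_i·y` with `x, y ∈ U⁺(q)`. -/
lemma pair_eq (i : Fin θ) {x y x' y' : UqAlgebra k q} (hx : x ∈ Uplus k q)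
    (hy : y ∈ Uplus k q) (hx' : x' ∈ Uplus k q) (hy' : y' ∈ Uplus k q)
    (h : x * UK k q i - UL k q i * y = x' * UK k q i - UL k q i * y') :
    x = x' ∧ y = y' := by
  have h0 : (x - x') * UK k q i - UL k q i * (y - y') = 0 := by
    have e : (x - x') * UK k q i - UL k q i * (y - y') =
        (x * UK k q i - UL k q i * y) - (x' * UK k q i - UL k q i * y') := by
      rw [sub_mul, mul_sub, sub_sub_sub_comm]
    rw [e, h, sub_self]
  obtain ⟨h1, h2⟩ := inj_zero q i (sub_mem hx hx') (sub_mem hy hy') h0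
  exact ⟨sub_eq_zero.mp h1, sub_eq_zero.mp h2⟩

/-! #### Existence of the skew-derivation pair -/

lemma mul_identity (i : Fin θ) (a b x y x' y' : UqAlgebra k q)
    (ha : a * UF k q i - UF k q i * a = x * UK k q i - UL k q i * y)
    (hb : b * UF k q i - UF k q i * b = x' * UK k q i - UL k q i * y') :
    (a * b) * UF k q i - UF k q i * (a * b) =
      (x * (UK k q i * b * UKinv k q i) + a * x') * UK k q i -
        UL k q i * (y * b + (ULinv k q i * a * UL k q i) * y') := by
  have e1 : x * (UK k q i * b * UKinv k q i) * UK k q i = x * UK k q i * b := by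
    have h := UKinv_mul_UK q i
    calc x * (UK k q i * b * UKinv k q i) * UK k q i
        = x * UK k q i * b * (UKinv k q i * UK k q i) := by noncomm_ring
      _ = x * UK k q i * b := by rw [h, mul_one]
  have e2 : UL k q i * ((ULinv k q i * a * UL k q i) * y') = a * (UL k q i * y') := by
    have h := UL_mul_ULinv q i
    calc UL k q i * ((ULinv k q i * a * UL k q i) * y')
        = (UL k q i * ULinv k q i) * a * UL k q i * y' := by noncomm_ring
      _ = a * (UL k q i * y') := by rw [h, one_mul, mul_assoc]
  calc (a * b) * UF k q i - UF k q i * (a * b)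
      = a * (b * UF k q i - UF k q i * b) + (a * UF k q i - UF k q i * a) * b := by
        rw [mul_sub, sub_mul, ← mul_assoc a (UF k q i) b, sub_add_sub_cancel,
          ← mul_assoc a b (UF k q i), mul_assoc (UF k q i) a b]
    _ = a * (x' * UK k q i - UL k q i * y') + (x * UK k q i - UL k q i * y) * b := by
        rw [ha, hb]
    _ = (x * (UK k q i * b * UKinv k q i) + a * x') * UK k q i -
        UL k q i * (y * b + (ULinv k q i * a * UL k q i) * y') := by
        rw [add_mul, e1, mul_add, e2, mul_sub, sub_mul, ← mul_assoc a x' (UK k q i),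
          mul_assoc (UL k q i) y b]
        abel

lemma ite_pair (i j : Fin θ) :
    UE k q j * UF k q i - UF k q i * UE k q j =
      (if i = j then (1 : UqAlgebra k q) else 0) * UK k q i
        - UL k q i * (if i = j then (1 : UqAlgebra k q) else 0) := by
  rw [UE_mul_UF q j i]
  rcases eq_or_ne i j with rfl | h
  · simp
  · simp [h, Ne.symm h]

lemma exists_pair (i : Fin θ) {a : UqAlgebra k q} (ha : a ∈ Uplus k q) :
    ∃ x y, x ∈ Uplus k q ∧ y ∈ Uplus k q ∧
      a * UF k q i - UF k q i * a = x * UK k q i - UL k q i * y := by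
  induction ha using Algebra.adjoin_induction with
  | mem a hmem =>
    obtain ⟨j, rfl⟩ := hmem
    refine ⟨if i = j then 1 else 0, if i = j then 1 else 0, ?_, ?_, ite_pair q i j⟩
    · split
      · exact one_mem _
      · exact zero_mem _
    · split
      · exact one_mem _
      · exact zero_mem _
  | algebraMap r =>
    refine ⟨0, 0, zero_mem _, zero_mem _, ?_⟩
    rw [zero_mul, mul_zero, sub_zero, Algebra.commutes, sub_self]
  | add a b hma hmb iha ihb =>
    obtain ⟨x, y, hx, hy, hxy⟩ := iha
    obtain ⟨x', y', hx', hy', hxy'⟩ := ihb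
    refine ⟨x + x', y + y', add_mem hx hx', add_mem hy hy', ?_⟩
    have e : (a + b) * UF k q i - UF k q i * (a + b)
        = (a * UF k q i - UF k q i * a) + (b * UF k q i - UF k q i * b) := by noncomm_ring
    rw [e, hxy, hxy']
    noncomm_ring
  | mul a b hma hmb iha ihb =>
    obtain ⟨x, y, hx, hy, hxy⟩ := iha
    obtain ⟨x', y', hx', hy', hxy'⟩ := ihb
    exact ⟨x * (UK k q i * b * UKinv k q i) + a * x',
      y * b + (ULinv k q i * a * UL k q i) * y',
      add_mem (mul_mem hx (conjK_mem q i hmb)) (mul_mem hma hx'),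
      add_mem (mul_mem hy hmb) (mul_mem (conjL_mem q i hma) hy'),
      mul_identity q i a b x y x' y' hxy hxy'⟩

end

end UqAux

set_option maxHeartbeats 2000000 in
/-- For each `i` there is a unique pair of `k`-linear maps `∂_i^K, ∂_i^L : U⁺(q) → U⁺(q)`
with `E·F_i − F_i·E = ∂_i^K(E)·K_i − L_i·∂_i^L(E)`; moreover they vanish on `1`, take the
value `δ_{ij}` on `E_j`, and satisfy the twisted Leibniz rules
`∂_i^K(E·E') = ∂_i^K(E)·(K_i E' K_i⁻) + E·∂_i^K(E')` and
`∂_i^L(E·E') = ∂_i^L(E)·E' + (L_i⁻ E L_i)·∂_i^L(E')`. -/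
theorem UqAlgebra_skew_derivations (i : Fin θ) :
    (∃! p : (Uplus k q →ₗ[k] Uplus k q) × (Uplus k q →ₗ[k] Uplus k q),
      IsSkewDerivPair k q i p.1 p.2) ∧
    (∀ dK dL : Uplus k q →ₗ[k] Uplus k q, IsSkewDerivPair k q i dK dL →
      dK 1 = 0 ∧ dL 1 = 0 ∧
      (∀ j : Fin θ,
        (dK (UEplus k q j) : UqAlgebra k q) = if i = j then 1 else 0) ∧
      (∀ j : Fin θ,
        (dL (UEplus k q j) : UqAlgebra k q) = if i = j then 1 else 0) ∧
      (∀ E E' : Uplus k q,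
        (dK (E * E') : UqAlgebra k q) =
          (dK E : UqAlgebra k q) * (UK k q i * (E' : UqAlgebra k q) * UKinv k q i) +
            (E : UqAlgebra k q) * (dK E' : UqAlgebra k q)) ∧
      (∀ E E' : Uplus k q,
        (dL (E * E') : UqAlgebra k q) =
          (dL E : UqAlgebra k q) * (E' : UqAlgebra k q) +
            (ULinv k q i * (E : UqAlgebra k q) * UL k q i) *
              (dL E' : UqAlgebra k q))) := by
  classical
  have key : ∀ E : Uplus k q, ∃ x y : UqAlgebra k q, x ∈ Uplus k q ∧ y ∈ Uplus k q ∧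
      (E : UqAlgebra k q) * UF k q i - UF k q i * (E : UqAlgebra k q)
        = x * UK k q i - UL k q i * y := by
    intro E
    obtain ⟨x, y, hx, hy, h⟩ := UqAux.exists_pair q i E.2
    exact ⟨x, y, hx, hy, h⟩
  choose fK fL hfK hfL hfEq using key
  have uniq : ∀ (E : Uplus k q) (x y : UqAlgebra k q), x ∈ Uplus k q → y ∈ Uplus k q →
      ((E : UqAlgebra k q) * UF k q i - UF k q i * (E : UqAlgebra k q)
        = x * UK k q i - UL k q i * y) → fK E = x ∧ fL E = y := by
    intro E x y hx hy h
    exact UqAux.pair_eq q i (hfK E) (hfL E) hx hy ((hfEq E).symm.trans h)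
  have hadd : ∀ t : Bool, ∀ E E' : Uplus k q,
      (if t then fK (E + E') else fL (E + E'))
        = (if t then fK E + fK E' else fL E + fL E') := by
    intro t E E'
    have h := uniq (E + E') (fK E + fK E') (fL E + fL E')
      (add_mem (hfK E) (hfK E')) (add_mem (hfL E) (hfL E')) (by
        have hc : ((E + E' : Uplus k q) : UqAlgebra k q)
            = (E : UqAlgebra k q) + (E' : UqAlgebra k q) := rfl
        have e : ((E : UqAlgebra k q) + (E' : UqAlgebra k q)) * UF k q i
            - UF k q i * ((E : UqAlgebra k q) + (E' : UqAlgebra k q))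
            = ((E : UqAlgebra k q) * UF k q i - UF k q i * (E : UqAlgebra k q))
              + ((E' : UqAlgebra k q) * UF k q i - UF k q i * (E' : UqAlgebra k q)) := by
          noncomm_ring
        rw [hc, e, hfEq E, hfEq E']
        noncomm_ring)
    cases t
    · simpa using h.2
    · simpa using h.1
  have hsmul : ∀ t : Bool, ∀ (r : k) (E : Uplus k q),
      (if t then fK (r • E) else fL (r • E))
        = (if t then r • fK E else r • fL E) := by
    intro t r E
    have h := uniq (r • E) (r • fK E) (r • fL E)
      (Subalgebra.smul_mem _ (hfK E) r) (Subalgebra.smul_mem _ (hfL E) r) (by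
        have hc : ((r • E : Uplus k q) : UqAlgebra k q) = r • (E : UqAlgebra k q) := rfl
        have e : (r • (E : UqAlgebra k q)) * UF k q i
            - UF k q i * (r • (E : UqAlgebra k q))
            = r • ((E : UqAlgebra k q) * UF k q i
                - UF k q i * (E : UqAlgebra k q)) := by
          rw [smul_sub, smul_mul_assoc, mul_smul_comm]
        rw [hc, e, hfEq E, smul_sub, smul_mul_assoc, mul_smul_comm])
    cases t
    · simpa using h.2
    · simpa using h.1
  let dK : Uplus k q →ₗ[k] Uplus k q :=
    { toFun := fun E => ⟨fK E, hfK E⟩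
      map_add' := fun E E' => Subtype.ext (by simpa using hadd true E E')
      map_smul' := fun r E => Subtype.ext (by simpa using hsmul true r E) }
  let dL : Uplus k q →ₗ[k] Uplus k q :=
    { toFun := fun E => ⟨fL E, hfL E⟩
      map_add' := fun E E' => Subtype.ext (by simpa using hadd false E E')
      map_smul' := fun r E => Subtype.ext (by simpa using hsmul false r E) }
  have hpair : IsSkewDerivPair k q i dK dL := fun E => hfEq E
  constructor
  · refine ⟨(dK, dL), hpair, ?_⟩
    rintro ⟨dK', dL'⟩ h'
    have h1 : dK' = dK := by
      apply LinearMap.ext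
      intro E
      exact Subtype.ext (UqAux.pair_eq q i (dK' E).2 (dL' E).2 (hfK E) (hfL E)
        ((h' E).symm.trans (hfEq E))).1
    have h2 : dL' = dL := by
      apply LinearMap.ext
      intro E
      exact Subtype.ext (UqAux.pair_eq q i (dK' E).2 (dL' E).2 (hfK E) (hfL E)
        ((h' E).symm.trans (hfEq E))).2
    rw [h1, h2]
  · intro gK gL hg
    have hone : (gK 1 : UqAlgebra k q) = 0 ∧ (gL 1 : UqAlgebra k q) = 0 := by
      apply UqAux.pair_eq q i (gK 1).2 (gL 1).2 (zero_mem _) (zero_mem _)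
      rw [← hg 1, OneMemClass.coe_one, one_mul, mul_one, sub_self, zero_mul, mul_zero,
        sub_self]
    refine ⟨Subtype.ext hone.1, Subtype.ext hone.2, ?_, ?_, ?_, ?_⟩
    · intro j
      exact (UqAux.pair_eq q i (gK (UEplus k q j)).2 (gL (UEplus k q j)).2
        (by split; exacts [one_mem _, zero_mem _])
        (by split; exacts [one_mem _, zero_mem _])
        ((hg (UEplus k q j)).symm.trans (UqAux.ite_pair q i j))).1
    · intro j
      exact (UqAux.pair_eq q i (gK (UEplus k q j)).2 (gL (UEplus k q j)).2
        (by split; exacts [one_mem _, zero_mem _])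
        (by split; exacts [one_mem _, zero_mem _])
        ((hg (UEplus k q j)).symm.trans (UqAux.ite_pair q i j))).2
    · intro E E'
      have hm := UqAux.mul_identity q i (E : UqAlgebra k q) (E' : UqAlgebra k q)
        (gK E : UqAlgebra k q) (gL E : UqAlgebra k q)
        (gK E' : UqAlgebra k q) (gL E' : UqAlgebra k q) (hg E) (hg E')
      have hp := hg (E * E')
      rw [MulMemClass.coe_mul] at hp
      exact (UqAux.pair_eq q i (gK (E * E')).2 (gL (E * E')).2
        (add_mem (mul_mem (gK E).2 (UqAux.conjK_mem q i E'.2))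
          (mul_mem E.2 (gK E').2))
        (add_mem (mul_mem (gL E).2 E'.2)
          (mul_mem (UqAux.conjL_mem q i E.2) (gL E').2))
        (hp.symm.trans hm)).1
    · intro E E'
      have hm := UqAux.mul_identity q i (E : UqAlgebra k q) (E' : UqAlgebra k q)
        (gK E : UqAlgebra k q) (gL E : UqAlgebra k q)
        (gK E' : UqAlgebra k q) (gL E' : UqAlgebra k q) (hg E) (hg E')
      have hp := hg (E * E')
      rw [MulMemClass.coe_mul] at hp
      exact (UqAux.pair_eq q i (gK (E * E')).2 (gL (E * E')).2
        (add_mem (mul_mem (gK E).2 (UqAux.conjK_mem q i E'.2))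
          (mul_mem E.2 (gK E').2))
        (add_mem (mul_mem (gL E).2 E'.2)
          (mul_mem (UqAux.conjL_mem q i E.2) (gL E').2))
        (hp.symm.trans hm)).2
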